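/- arXiv:1607.05001 — 2 statements merged into one kernel-verified Lean document; each statement's English description precedes it below -/
import Mathlib

section
/- Let A = (a_{cv}) be an m×n real matrix with nonnegative entries and no all-zero column, let x ∈ ℝ^n_{≥0}, and let y = Ax. For every iteration ℓ ≥ 1 and every variable node v: M^{(ℓ)}_v = x_v if and only if there exists c ∈ N(v) such that μ^{(ℓ−1)}_{v'} = x_{v'} for every v' ∈ N(c) with v' ≠ v. -/
open scoped Classical
open Finset

variable {C V : Type*} [Fintype C] [Fintype V]

/-- The IPA lower/upper bounds `(μ^{(ℓ)}, M^{(ℓ)})` computed from measurement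
matrix `A` and measurement vector `y`. -/
noncomputable def ipa (A : C → V → ℝ) (y : C → ℝ) : ℕ → (V → ℝ) × (V → ℝ)
  | 0 => (fun _ => 0,
      fun v => sInf {r : ℝ | ∃ c, A c v ≠ 0 ∧ r = y c / A c v})
  | ℓ + 1 =>
      (fun v => sSup {r : ℝ | ∃ c, A c v ≠ 0 ∧
          r = max 0 ((y c - ∑ v' ∈ Finset.univ.filter (fun v' => v' ≠ v),
              A c v' * (ipa A y ℓ).2 v') / A c v)},
       fun v => sInf {r : ℝ | ∃ c, A c v ≠ 0 ∧
          r = (y c - ∑ v' ∈ Finset.univ.filter (fun v' => v' ≠ v),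
              A c v' * (ipa A y ℓ).1 v') / A c v})

/-- IPA lower bound `μ^{(ℓ)}_v`. -/
noncomputable def ipaMu (A : C → V → ℝ) (y : C → ℝ) (ℓ : ℕ) (v : V) : ℝ := (ipa A y ℓ).1 v

/-- IPA upper bound `M^{(ℓ)}_v`. -/
noncomputable def ipaM (A : C → V → ℝ) (y : C → ℝ) (ℓ : ℕ) (v : V) : ℝ := (ipa A y ℓ).2 v

/-- Neighbourhood `N(v)` of a variable node. -/
noncomputable def Nv (A : C → V → ℝ) (v : V) : Finset C := Finset.univ.filter fun c => A c v ≠ 0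

/-- Neighbourhood `N(c)` of a measurement node. -/
noncomputable def Nc (A : C → V → ℝ) (c : C) : Finset V := Finset.univ.filter fun v => A c v ≠ 0

/-- Neighbourhood `N(T)` of a set of variable nodes. -/
noncomputable def NT (A : C → V → ℝ) (T : Finset V) : Finset C :=
  Finset.univ.filter fun c => ∃ v ∈ T, A c v ≠ 0

/-- `N_T(c) = N(c) ∩ T`. -/
noncomputable def NTc (A : C → V → ℝ) (T : Finset V) (c : C) : Finset V :=
  T.filter fun v => A c v ≠ 0

/-- A stopping set: every neighbouring measurement node is connected at least twice to `T`. -/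
def StoppingSet (A : C → V → ℝ) (T : Finset V) : Prop :=
  ∀ c ∈ NT A T, 2 ≤ (NTc A T c).card

/-- The set `S` of variable nodes outside `T` connected only to `N(T)`. -/
noncomputable def Sset (A : C → V → ℝ) (T : Finset V) : Finset V :=
  Finset.univ.filter fun v => v ∉ T ∧ ∀ c, A c v ≠ 0 → c ∈ NT A T

/-- The termatiko condition on a set `T` of variable nodes. -/
def TermatikoCond (A : C → V → ℝ) (T : Finset V) : Prop :=
  ∀ c ∈ NT A T,
    (∃ v ∈ Sset A T, A c v ≠ 0) ∨
    2 ≤ ((NTc A T c).filter fun v => ∀ c', A c' v ≠ 0 → 2 ≤ (NTc A T c').card).card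

/-- Real-valued indicator vector `1_T` of a set of variable nodes. -/
noncomputable def indVec (T : Finset V) : V → ℝ := fun v => if v ∈ T then 1 else 0

/-- The measurement vector `A · 1_T`. -/
noncomputable def measT (A : C → V → ℝ) (T : Finset V) : C → ℝ :=
  fun c => ∑ v, A c v * indVec T v

/-- `T` is a termatiko set of `A`: the IPA run on `A · 1_T` keeps all lower bounds at zero. -/
def IsTermatiko (A : C → V → ℝ) (T : Finset V) : Prop :=
  ∀ (ℓ : ℕ) (v : V), ipaMu A (measT A T) ℓ v = 0

/-- `A` is a binary (0/1) matrix. -/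
def Binary (A : C → V → ℝ) : Prop := ∀ c v, A c v = 0 ∨ A c v = 1

/-- `A` has no all-zero column. -/
def NoZeroCol (A : C → V → ℝ) : Prop := ∀ v, ∃ c, A c v ≠ 0

/-- `A` has nonnegative entries. -/
def MatNonneg (A : C → V → ℝ) : Prop := ∀ c v, 0 ≤ A c v

lemma ipa_elem_eq (A : C → V → ℝ) (x μ : V → ℝ) (y : C → ℝ)
    (c : C) (v : V) (hc : A c v ≠ 0) (hy : y c = ∑ v', A c v' * x v') :
    (y c - ∑ v' ∈ Finset.univ.filter (fun v' => v' ≠ v), A c v' * μ v') / A c v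
      = x v + (∑ v' ∈ Finset.univ.filter (fun v' => v' ≠ v),
          A c v' * (x v' - μ v')) / A c v := by
  have key : y c - ∑ v' ∈ Finset.univ.erase v, A c v' * μ v'
      = A c v * x v + ∑ v' ∈ Finset.univ.erase v, A c v' * (x v' - μ v') := by
    rw [hy, ← Finset.add_sum_erase _ (fun v' => A c v' * x v') (Finset.mem_univ v),
      add_sub_assoc, ← Finset.sum_sub_distrib]
    congr 1
    exact Finset.sum_congr rfl (fun i _ => (mul_sub _ _ _).symm)
  rw [Finset.filter_ne', key, add_div, mul_div_cancel_left₀ _ hc]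

lemma ipa_bounds {C V : Type*} [Fintype C] [Fintype V]
    (A : C → V → ℝ) (hA : MatNonneg A) (hcol : NoZeroCol A)
    (x : V → ℝ) (hx : ∀ v, 0 ≤ x v)
    (y : C → ℝ) (hy : ∀ c, y c = ∑ v, A c v * x v) :
    ∀ ℓ : ℕ, (∀ v, (ipa A y ℓ).1 v ≤ x v) ∧ (∀ v, x v ≤ (ipa A y ℓ).2 v) := by
  intro ℓ
  induction ℓ with
  | zero =>
    refine ⟨fun v => ?_, fun v => ?_⟩
    · simpa [ipa] using hx v
    · obtain ⟨c, hc⟩ := hcol v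
      simp only [ipa]
      apply le_csInf
      · exact ⟨y c / A c v, c, hc, rfl⟩
      rintro r ⟨c', hc', rfl⟩
      have hpos : 0 < A c' v := lt_of_le_of_ne (hA c' v) (Ne.symm hc')
      rw [le_div_iff₀ hpos, hy c', mul_comm]
      exact Finset.single_le_sum (fun i _ => mul_nonneg (hA c' i) (hx i))
        (Finset.mem_univ v)
  | succ ℓ ih =>
    obtain ⟨ihμ, ihM⟩ := ih
    refine ⟨fun v => ?_, fun v => ?_⟩
    · obtain ⟨c, hc⟩ := hcol v
      simp only [ipa]
      apply csSup_le
      · exact ⟨_, c, hc, rfl⟩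
      rintro r ⟨c', hc', rfl⟩
      have hpos : 0 < A c' v := lt_of_le_of_ne (hA c' v) (Ne.symm hc')
      refine max_le (hx v) ?_
      rw [ipa_elem_eq A x _ y c' v hc' (hy c')]
      have hs : (∑ v' ∈ Finset.univ.filter (fun v' => v' ≠ v),
          A c' v' * (x v' - (ipa A y ℓ).2 v')) ≤ 0 := by
        apply Finset.sum_nonpos
        intro i _
        exact mul_nonpos_of_nonneg_of_nonpos (hA c' i) (by linarith [ihM i])
      nlinarith [div_nonpos_of_nonpos_of_nonneg hs (le_of_lt hpos)]
    · obtain ⟨c, hc⟩ := hcol v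
      simp only [ipa]
      apply le_csInf
      · exact ⟨_, c, hc, rfl⟩
      rintro r ⟨c', hc', rfl⟩
      have hpos : 0 < A c' v := lt_of_le_of_ne (hA c' v) (Ne.symm hc')
      rw [ipa_elem_eq A x _ y c' v hc' (hy c')]
      have hs : 0 ≤ (∑ v' ∈ Finset.univ.filter (fun v' => v' ≠ v),
          A c' v' * (x v' - (ipa A y ℓ).1 v')) := by
        apply Finset.sum_nonneg
        intro i _
        exact mul_nonneg (hA c' i) (by linarith [ihμ i])
      nlinarith [div_nonneg hs (le_of_lt hpos)]

/-- for `ℓ ≥ 1`, the upper bound reaches `x_v` iff some neighbour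
`c` has all other neighbours' lower bounds exact at iteration `ℓ-1`. -/
theorem ipa_upper_exact_iff {m n : ℕ} (A : Fin m → Fin n → ℝ)
    (hA : MatNonneg A) (hcol : NoZeroCol A)
    (x : Fin n → ℝ) (hx : ∀ v, 0 ≤ x v)
    (y : Fin m → ℝ) (hy : ∀ c, y c = ∑ v, A c v * x v) :
    ∀ (ℓ : ℕ) (v : Fin n),
      ipaM A y (ℓ + 1) v = x v ↔
        ∃ c, A c v ≠ 0 ∧ ∀ v', A c v' ≠ 0 → v' ≠ v → ipaMu A y ℓ v' = x v' := by
  intro ℓ v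
  obtain ⟨hμ, hM⟩ := ipa_bounds A hA hcol x hx y hy ℓ
  set μ : Fin n → ℝ := (ipa A y ℓ).1 with hμdef
  set f : Fin m → ℝ := fun c =>
    (y c - ∑ v' ∈ Finset.univ.filter (fun v' => v' ≠ v), A c v' * μ v') / A c v
    with hfdef
  set S : Set ℝ := {r | ∃ c, A c v ≠ 0 ∧ r = f c} with hSdef
  have hSimg : S = f '' {c | A c v ≠ 0} := by
    ext r; constructor
    · rintro ⟨c, hc, rfl⟩; exact ⟨c, hc, rfl⟩
    · rintro ⟨c, hc, rfl⟩; exact ⟨c, hc, rfl⟩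
  have hfin : S.Finite := by
    rw [hSimg]; exact (Set.toFinite _).image f
  obtain ⟨c₀, hc₀⟩ := hcol v
  have hne : S.Nonempty := ⟨f c₀, c₀, hc₀, rfl⟩
  have hMeq : ipaM A y (ℓ + 1) v = sInf S := by
    simp only [hSdef, hfdef, hμdef, ipaM, ipa]
    congr!
  -- every element of S is ≥ x v, with equality iff the condition holds for c
  have hkey : ∀ c : Fin m, A c v ≠ 0 →
      x v ≤ f c ∧ (f c = x v ↔ ∀ v', A c v' ≠ 0 → v' ≠ v → μ v' = x v') := by
    intro c hc
    have hpos : 0 < A c v := lt_of_le_of_ne (hA c v) (Ne.symm hc)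
    have hfe : f c = x v + (∑ v' ∈ Finset.univ.filter (fun v' => v' ≠ v),
        A c v' * (x v' - μ v')) / A c v := by
      have h0 := ipa_elem_eq A x μ y c v hc (hy c)
      simp only [hfdef]
      convert h0 using 4 <;> (ext i; simp)
    have hterm : ∀ i ∈ Finset.univ.filter (fun v' => v' ≠ v),
        0 ≤ A c i * (x i - μ i) := fun i _ =>
      mul_nonneg (hA c i) (by linarith [hμ i])
    have hs : 0 ≤ ∑ v' ∈ Finset.univ.filter (fun v' => v' ≠ v),
        A c v' * (x v' - μ v') := Finset.sum_nonneg hterm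
    constructor
    · rw [hfe]; nlinarith [div_nonneg hs hpos.le]
    · constructor
      · intro heq
        have hzero : (∑ v' ∈ Finset.univ.filter (fun v' => v' ≠ v),
            A c v' * (x v' - μ v')) = 0 := by
          rw [hfe] at heq
          have : (∑ v' ∈ Finset.univ.filter (fun v' => v' ≠ v),
              A c v' * (x v' - μ v')) / A c v = 0 := by linarith
          have := (div_eq_zero_iff.mp this)
          tauto
        intro v' hv' hvne
        have := (Finset.sum_eq_zero_iff_of_nonneg hterm).mp hzero v'
          (by simp [hvne])
        have hA' : 0 < A c v' := lt_of_le_of_ne (hA c v') (Ne.symm hv')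
        have : x v' - μ v' = 0 := by
          rcases mul_eq_zero.mp this with h | h
          · exact absurd h hA'.ne'
          · exact h
        linarith
      · intro hall
        have hzero : (∑ v' ∈ Finset.univ.filter (fun v' => v' ≠ v),
            A c v' * (x v' - μ v')) = 0 := by
          apply Finset.sum_eq_zero
          intro i hi
          simp only [Finset.mem_filter] at hi
          by_cases hAi : A c i = 0
          · simp [hAi]
          · rw [hall i hAi hi.2]; ring
        rw [hfe, hzero, zero_div, add_zero]
  constructor
  · intro h
    rw [hMeq] at h
    have hmem : sInf S ∈ S := hne.csInf_mem hfin
    obtain ⟨c, hc, hfc⟩ := hmem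
    refine ⟨c, hc, fun v' hv' hvne => ?_⟩
    exact (hkey c hc).2.mp (by rw [← hfc, ← h]) v' hv' hvne
  · rintro ⟨c, hc, hall⟩
    rw [hMeq]
    have hfc : f c = x v := (hkey c hc).2.mpr hall
    apply le_antisymm
    · have : f c ∈ S := ⟨c, hc, rfl⟩
      calc sInf S ≤ f c := csInf_le hfin.bddBelow this
        _ = x v := hfc
    · apply le_csInf hne
      rintro r ⟨c', hc', rfl⟩
      exact (hkey c' hc').1
end

section
/- Let A ∈ {0,1}^{m×n} be a binary measurement matrix with no all-zero column, let T ⊆ V, set y = A·1_T and S = {v ∈ V∖T : N(v) ⊆ N(T)}. Suppose there exists a measurement node c* ∈ N(T) with N(c*) ∩ S = ∅ and |{v ∈ N_T(c*) : every c' ∈ N(v) satisfies |N_T(c')| ≥ 2}| ≤ 1. Then there exists v* ∈ N_T(c*) such that the IPA run on (y, A) yields μ^{(1)}_{v*} = 1 = (1_T)_{v*}; in particular, T is not a termatiko set of A. -/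
open scoped Classical
open Finset

variable {C V : Type*} [Fintype C] [Fintype V]

/-! ### Auxiliary lemmas -/

lemma ipaAux_finite (f : C → ℝ) (p : C → Prop) :
    {r : ℝ | ∃ c, p c ∧ r = f c}.Finite :=
  (Set.finite_range f).subset (by rintro r ⟨c, _, rfl⟩; exact ⟨c, rfl⟩)

lemma indVec_nonneg (T : Finset V) (v : V) : 0 ≤ indVec T v := by
  unfold indVec; split_ifs <;> norm_num

lemma binary_nonneg {A : C → V → ℝ} (hbin : Binary A) (c : C) (v : V) : 0 ≤ A c v := by
  rcases hbin c v with h | h <;> simp [h]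

lemma binary_one {A : C → V → ℝ} (hbin : Binary A) {c : C} {v : V} (h : A c v ≠ 0) :
    A c v = 1 := (hbin c v).resolve_left h

lemma sum_split (A : C → V → ℝ) (c : C) (v : V) (g : V → ℝ) :
    ∑ v', A c v' * g v'
      = A c v * g v + ∑ v' ∈ Finset.univ.filter (fun v' => v' ≠ v), A c v' * g v' := by
  rw [Finset.filter_ne']
  exact (Finset.add_sum_erase _ _ (Finset.mem_univ v)).symm

lemma measT_card {A : C → V → ℝ} (hbin : Binary A) (T : Finset V) (c : C) :
    measT A T c = ((NTc A T c).card : ℝ) := by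
  unfold measT
  have h : ∀ v, A c v * indVec T v = if v ∈ NTc A T c then (1:ℝ) else 0 := by
    intro v
    rcases hbin c v with h | h <;> simp [NTc, indVec, h]
  rw [Finset.sum_congr rfl fun v _ => h v, Finset.sum_boole]
  congr 1
  rw [Finset.filter_mem_eq_inter, Finset.univ_inter]

lemma ipa_sandwich {A : C → V → ℝ} (hbin : Binary A) (hcol : NoZeroCol A) (T : Finset V) :
    ∀ ℓ : ℕ, (∀ v, ipaMu A (measT A T) ℓ v ≤ indVec T v) ∧
      (∀ v, indVec T v ≤ ipaM A (measT A T) ℓ v) := by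
  intro ℓ
  induction ℓ with
  | zero =>
    constructor
    · intro v
      simpa [ipaMu, ipa] using indVec_nonneg T v
    · intro v
      simp only [ipaM, ipa]
      obtain ⟨c₀, hc₀⟩ := hcol v
      refine le_csInf ⟨_, ⟨c₀, hc₀, rfl⟩⟩ ?_
      rintro r ⟨c, hc, rfl⟩
      rw [binary_one hbin hc, div_one]
      calc indVec T v = A c v * indVec T v := by rw [binary_one hbin hc, one_mul]
        _ ≤ measT A T c :=
          Finset.single_le_sum
            (fun v' _ => mul_nonneg (binary_nonneg hbin c v') (indVec_nonneg T v'))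
            (Finset.mem_univ v)
  | succ ℓ ih =>
    obtain ⟨ihμ, ihM⟩ := ih
    constructor
    · intro v
      simp only [ipaMu, ipa]
      obtain ⟨c₀, hc₀⟩ := hcol v
      refine csSup_le ⟨_, ⟨c₀, hc₀, rfl⟩⟩ ?_
      rintro r ⟨c, hc, rfl⟩
      rw [binary_one hbin hc, div_one]
      apply max_le (indVec_nonneg T v)
      have h1 : ∑ v' ∈ Finset.univ.filter (fun v' => v' ≠ v), A c v' * indVec T v'
          ≤ ∑ v' ∈ Finset.univ.filter (fun v' => v' ≠ v),
              A c v' * (ipa A (measT A T) ℓ).2 v' :=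
        Finset.sum_le_sum fun v' _ =>
          mul_le_mul_of_nonneg_left (ihM v') (binary_nonneg hbin c v')
      have h2 : measT A T c = A c v * indVec T v
          + ∑ v' ∈ Finset.univ.filter (fun v' => v' ≠ v), A c v' * indVec T v' :=
        sum_split A c v (indVec T)
      rw [binary_one hbin hc, one_mul] at h2
      linarith
    · intro v
      simp only [ipaM, ipa]
      obtain ⟨c₀, hc₀⟩ := hcol v
      refine le_csInf ⟨_, ⟨c₀, hc₀, rfl⟩⟩ ?_
      rintro r ⟨c, hc, rfl⟩
      rw [binary_one hbin hc, div_one]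
      have h1 : ∑ v' ∈ Finset.univ.filter (fun v' => v' ≠ v),
              A c v' * (ipa A (measT A T) ℓ).1 v'
          ≤ ∑ v' ∈ Finset.univ.filter (fun v' => v' ≠ v), A c v' * indVec T v' :=
        Finset.sum_le_sum fun v' _ =>
          mul_le_mul_of_nonneg_left (ihμ v') (binary_nonneg hbin c v')
      have h2 : measT A T c = A c v * indVec T v
          + ∑ v' ∈ Finset.univ.filter (fun v' => v' ≠ v), A c v' * indVec T v' :=
        sum_split A c v (indVec T)
      rw [binary_one hbin hc, one_mul] at h2
      linarith


/-- if some `c* ∈ N(T)` is not connected to `S` and at most one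
`v ∈ N_T(c*)` has all its neighbours connected at least twice to `T`, then the
IPA (run on `A·1_T`) recovers some `v* ∈ N_T(c*)` already at iteration 1;
in particular `T` is not a termatiko set. -/
theorem not_termatiko_of_bad_check {m n : ℕ} (A : Fin m → Fin n → ℝ)
    (hbin : Binary A) (hcol : NoZeroCol A) (T : Finset (Fin n))
    (cs : Fin m) (hcs : cs ∈ NT A T)
    (hcsS : ∀ v ∈ Sset A T, A cs v = 0)
    (hone : ((NTc A T cs).filter fun v => ∀ c', A c' v ≠ 0 → 2 ≤ (NTc A T c').card).card ≤ 1) :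
    (∃ vs ∈ NTc A T cs,
        ipaMu A (measT A T) 1 vs = 1 ∧ indVec T vs = 1) ∧
      ¬ IsTermatiko A T := by
  classical
  have hsand := ipa_sandwich hbin hcol T
  set y := measT A T with hy
  -- `N_T(c*)` is nonempty
  have hNTc : (NTc A T cs).Nonempty := by
    simp only [NT, Finset.mem_filter, Finset.mem_univ, true_and] at hcs
    obtain ⟨v, hvT, hv⟩ := hcs
    exact ⟨v, Finset.mem_filter.2 ⟨hvT, hv⟩⟩
  -- choose `vs`
  set F := ((NTc A T cs).filter fun v => ∀ c', A c' v ≠ 0 → 2 ≤ (NTc A T c').card) with hFdef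
  obtain ⟨vs, hvs, hvsF⟩ : ∃ vs ∈ NTc A T cs, ∀ v' ∈ F, v' = vs := by
    rcases F.eq_empty_or_nonempty with he | ⟨w, hw⟩
    · obtain ⟨v, hv⟩ := hNTc
      exact ⟨v, hv, by simp [he]⟩
    · exact ⟨w, Finset.filter_subset _ _ hw,
        fun v' hv' => Finset.card_le_one.1 hone v' hv' w hw⟩
  have hAvs : A cs vs = 1 := binary_one hbin (Finset.mem_filter.1 hvs).2
  have hvsT : vs ∈ T := (Finset.mem_filter.1 hvs).1
  -- bounds on `M⁰`
  have hM0le : ∀ v : Fin n, ∀ c' : Fin m, A c' v ≠ 0 →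
      ipaM A y 0 v ≤ y c' / A c' v := by
    intro v c' hc'
    simp only [ipaM, ipa]
    exact csInf_le ((ipaAux_finite _ _).bddBelow) ⟨c', hc', rfl⟩
  have hM0le1 : ∀ v : Fin n, (∃ c', A c' v ≠ 0 ∧ (NTc A T c').card ≤ 1) →
      ipaM A y 0 v ≤ 1 := by
    rintro v ⟨c', hc', hcard⟩
    refine (hM0le v c' hc').trans ?_
    rw [binary_one hbin hc', div_one, hy, measT_card hbin]
    exact_mod_cast hcard
  have hM0le0 : ∀ v : Fin n, v ∉ T → A cs v ≠ 0 → ipaM A y 0 v ≤ 0 := by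
    intro v hvT hcsv
    have hnS : v ∉ Sset A T := fun hS => hcsv (hcsS v hS)
    have : ∃ c', A c' v ≠ 0 ∧ c' ∉ NT A T := by
      by_contra hcon
      push_neg at hcon
      refine hnS ?_
      simp only [Sset, Finset.mem_filter, Finset.mem_univ, true_and]
      exact ⟨hvT, hcon⟩
    obtain ⟨c', hc', hcNT⟩ := this
    have hempty : NTc A T c' = ∅ := by
      by_contra hne
      obtain ⟨w, hw⟩ := Finset.nonempty_of_ne_empty hne
      obtain ⟨hwT, hwA⟩ := Finset.mem_filter.1 hw
      exact hcNT (by simp only [NT, Finset.mem_filter, Finset.mem_univ, true_and]; exact ⟨w, hwT, hwA⟩)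
    refine (hM0le v c' hc').trans ?_
    rw [binary_one hbin hc', div_one, hy, measT_card hbin, hempty]
    simp
  -- the key sum bound at `c*`
  have key : ∑ v' ∈ Finset.univ.filter (fun v' => v' ≠ vs), A cs v' * ipaM A y 0 v'
      ≤ ((NTc A T cs).card : ℝ) - 1 := by
    have hbound : ∀ v' ∈ Finset.univ.filter (fun v' => v' ≠ vs),
        A cs v' * ipaM A y 0 v' ≤ if v' ∈ NTc A T cs then (1:ℝ) else 0 := by
      intro v' hv'
      have hne : v' ≠ vs := (Finset.mem_filter.1 hv').2
      rcases hbin cs v' with h0 | h1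
      · simp [NTc, h0]
      · have hA : A cs v' ≠ 0 := by rw [h1]; norm_num
        by_cases hT : v' ∈ T
        · have hmem : v' ∈ NTc A T cs := Finset.mem_filter.2 ⟨hT, hA⟩
          have hnF : v' ∉ F := fun hmemF => hne (hvsF v' hmemF)
          have hex : ∃ c', A c' v' ≠ 0 ∧ (NTc A T c').card ≤ 1 := by
            by_contra hcon
            push_neg at hcon
            exact hnF (Finset.mem_filter.2 ⟨hmem, fun c' hc' => by
              have := hcon c' hc'; omega⟩)
          simp only [hmem, if_true, h1, one_mul]
          exact hM0le1 v' hex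
        · have hnm : v' ∉ NTc A T cs := fun hm => hT (Finset.mem_filter.1 hm).1
          simp only [hnm, if_false, h1, one_mul]
          exact hM0le0 v' hT hA
    calc ∑ v' ∈ Finset.univ.filter (fun v' => v' ≠ vs), A cs v' * ipaM A y 0 v'
        ≤ ∑ v' ∈ Finset.univ.filter (fun v' => v' ≠ vs),
            (if v' ∈ NTc A T cs then (1:ℝ) else 0) := Finset.sum_le_sum hbound
      _ = (((Finset.univ.filter (fun v' => v' ≠ vs)).filter
            (fun v' => v' ∈ NTc A T cs)).card : ℝ) := by rw [Finset.sum_boole]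
      _ = (((NTc A T cs).erase vs).card : ℝ) := by
          have hset : ((Finset.univ.filter (fun v' => v' ≠ vs)).filter
              (fun v' => v' ∈ NTc A T cs)) = (NTc A T cs).erase vs := by
            ext a
            simp only [Finset.mem_filter, Finset.mem_univ, true_and, Finset.mem_erase]
          rw [hset]
      _ = ((NTc A T cs).card : ℝ) - 1 := by
          rw [Finset.card_erase_of_mem hvs]
          have h1 : 1 ≤ (NTc A T cs).card := Finset.card_pos.2 ⟨vs, hvs⟩
          push_cast [Nat.cast_sub h1]
          ring
  have hycs : y cs = ((NTc A T cs).card : ℝ) := by rw [hy]; exact measT_card hbin T cs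
  have hge1 : (1:ℝ) ≤ y cs
      - ∑ v' ∈ Finset.univ.filter (fun v' => v' ≠ vs), A cs v' * ipaM A y 0 v' := by
    rw [hycs]; linarith
  -- lower bound on `μ¹`
  have hμ1ge : (1:ℝ) ≤ ipaMu A y 1 vs := by
    simp only [ipaMu, ipa]
    refine le_trans ?_ (le_csSup ((ipaAux_finite _ _).bddAbove) ⟨cs, ?_, rfl⟩)
    · rw [hAvs, div_one]
      refine le_max_of_le_right ?_
      convert hge1 using 2
      congr 1
      · simp [ipaM, ipa]
    · rw [hAvs]; norm_num
  have hμ1le : ipaMu A y 1 vs ≤ 1 := by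
    have h := (hsand 1).1 vs
    rw [indVec] at h
    simpa [hvsT] using h
  have hμ1 : ipaMu A y 1 vs = 1 := le_antisymm hμ1le hμ1ge
  refine ⟨⟨vs, hvs, hμ1, by simp [indVec, hvsT]⟩, fun hterm => ?_⟩
  have h0 := hterm 1 vs
  rw [← hy] at h0
  rw [hμ1] at h0
  norm_num at h0
end
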